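/- (Noise robustness of the softened alignment loss; formal content of the paper's Theorem on noise robustness.) Let C ≥ 2 be an integer and ℓ a bounded measurable loss that is symmetric, i.e., there is a constant K with ∑_{j=1}^{C} ℓ(u, j) = K for every prediction u. Under symmetric label noise with rate η satisfying η < 1 − 1/C, for all measurable classifiers f and f′ one has R_η(f) − R_η(f′) = (1 − ηC/(C−1)) · (R(f) − R(f′)), and the coefficient 1 − ηC/(C−1) is strictly positive; consequently f minimizes the clean risk R over any class of classifiers if and only if f minimizes the noisy risk R_η over that class. -/

import Mathlib

open MeasureTheory

namespace DisNCL

private lemma partition_sum {Ω : Type*} [MeasurableSpace Ω] (ν : Measure Ω) {C : ℕ}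
    (z : Ω → Fin C) (hz : Measurable z) (h : Ω → ℝ) (hint : Integrable h ν) :
    ∫ ω, h ω ∂ν = ∑ i, ∫ ω in {ω | z ω = i}, h ω ∂ν := by
  have hms : ∀ i : Fin C, MeasurableSet {ω | z ω = i} := fun i => hz (measurableSet_singleton i)
  have hrepr : ∀ ω, h ω = ∑ i, Set.indicator {ω | z ω = i} h ω := by
    intro ω
    rw [Finset.sum_eq_single (z ω)]
    · simp [Set.indicator]
    · intro b _ hb
      exact Set.indicator_of_notMem (by simpa using fun hzb => hb hzb.symm) h
    · simp
  calc ∫ ω, h ω ∂ν = ∫ ω, ∑ i, Set.indicator {ω | z ω = i} h ω ∂ν := by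
        simp_rw [← hrepr]
    _ = ∑ i, ∫ ω, Set.indicator {ω | z ω = i} h ω ∂ν :=
        integral_finset_sum _ (fun i _ => hint.indicator (hms i))
    _ = ∑ i, ∫ ω in {ω | z ω = i}, h ω ∂ν :=
        Finset.sum_congr rfl fun i _ => integral_indicator (hms i)

theorem noise_robustness_of_symmetric_loss
    {Ω 𝒳 P : Type*} [MeasurableSpace Ω] [MeasurableSpace 𝒳] [MeasurableSpace P]
    (μ : Measure Ω) [IsProbabilityMeasure μ]
    (C : ℕ) (hC : 2 ≤ C)
    (X : Ω → 𝒳) (y : Ω → Fin C) (ytilde : Ω → Fin C)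
    (hX : Measurable X) (hy : Measurable y) (hyt : Measurable ytilde)
    (η : ℝ) (hη0 : 0 ≤ η) (hη : η < 1 - 1 / (C : ℝ))
    (hnoise : ∀ (A : Set 𝒳), MeasurableSet A → ∀ (i j : Fin C),
      μ {ω | X ω ∈ A ∧ y ω = i ∧ ytilde ω = j} =
        ENNReal.ofReal (if j = i then 1 - η else η / ((C : ℝ) - 1)) *
          μ {ω | X ω ∈ A ∧ y ω = i})
    (ℓ : P → Fin C → ℝ) (hℓ : ∀ j, Measurable (fun u => ℓ u j))
    (hbdd : ∃ M : ℝ, ∀ u j, |ℓ u j| ≤ M)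
    (K : ℝ) (hsym : ∀ u : P, ∑ j, ℓ u j = K) :
    (∀ f f' : 𝒳 → P, Measurable f → Measurable f' →
      (∫ ω, ℓ (f (X ω)) (ytilde ω) ∂μ) - (∫ ω, ℓ (f' (X ω)) (ytilde ω) ∂μ) =
        (1 - η * C / ((C : ℝ) - 1)) *
          ((∫ ω, ℓ (f (X ω)) (y ω) ∂μ) - (∫ ω, ℓ (f' (X ω)) (y ω) ∂μ))) ∧
    0 < 1 - η * C / ((C : ℝ) - 1) ∧
    (∀ (F : Set (𝒳 → P)), (∀ g ∈ F, Measurable g) → ∀ f ∈ F,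
      ((∀ g ∈ F, (∫ ω, ℓ (f (X ω)) (y ω) ∂μ) ≤ ∫ ω, ℓ (g (X ω)) (y ω) ∂μ) ↔
        (∀ g ∈ F, (∫ ω, ℓ (f (X ω)) (ytilde ω) ∂μ) ≤ ∫ ω, ℓ (g (X ω)) (ytilde ω) ∂μ))) := by
  obtain ⟨M, hM⟩ := hbdd
  set b : ℝ := 1 - η * C / ((C : ℝ) - 1) with hb_def
  set c : ℝ := η * K / ((C : ℝ) - 1) with hc_def
  set a : Fin C → Fin C → ℝ := fun i j => if j = i then 1 - η else η / ((C : ℝ) - 1) with ha_def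
  have hC2 : (2 : ℝ) ≤ (C : ℝ) := by exact_mod_cast hC
  have hC0 : (0 : ℝ) < (C : ℝ) := by linarith
  have hCpos : (0 : ℝ) < (C : ℝ) - 1 := by linarith
  have hCne : ((C : ℝ) - 1) ≠ 0 := ne_of_gt hCpos
  have hη1 : η < 1 := by
    have h1 : 0 < 1 / (C : ℝ) := by positivity
    linarith
  have h1 : η * C < (C : ℝ) - 1 := by
    have h2 : η * C < (1 - 1 / (C : ℝ)) * C := mul_lt_mul_of_pos_right hη hC0
    have h3 : (1 - 1 / (C : ℝ)) * C = (C : ℝ) - 1 := by field_simp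
    linarith
  have hbpos : 0 < b := by
    rw [hb_def, sub_pos, div_lt_one hCpos]; exact h1
  have ha_nonneg : ∀ i j, 0 ≤ a i j := by
    intro i j
    by_cases hij : j = i <;> simp [ha_def, hij]
    · linarith
    · positivity
  have hmeasy : ∀ i : Fin C, MeasurableSet {ω | y ω = i} := fun i =>
    hy (measurableSet_singleton i)
  have hmeasyt : ∀ j : Fin C, MeasurableSet {ω | ytilde ω = j} := fun j =>
    hyt (measurableSet_singleton j)
  -- the pushforward identity from the noise condition
  have hmap : ∀ i j : Fin C,
      (μ.restrict {ω | y ω = i ∧ ytilde ω = j}).map X =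
        ENNReal.ofReal (a i j) • (μ.restrict {ω | y ω = i}).map X := by
    intro i j
    ext A hA
    have hSij : MeasurableSet {ω | y ω = i ∧ ytilde ω = j} := (hmeasy i).inter (hmeasyt j)
    rw [Measure.map_apply hX hA, Measure.smul_apply, Measure.map_apply hX hA,
      Measure.restrict_apply (hX hA), Measure.restrict_apply (hX hA)]
    have e1 : X ⁻¹' A ∩ {ω | y ω = i ∧ ytilde ω = j} =
        {ω | X ω ∈ A ∧ y ω = i ∧ ytilde ω = j} := rfl
    have e2 : X ⁻¹' A ∩ {ω | y ω = i} = {ω | X ω ∈ A ∧ y ω = i} := rfl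
    rw [e1, e2, hnoise A hA i j, smul_eq_mul]
  -- integral version of the pushforward identity
  have hint_map : ∀ (i j : Fin C) (g : 𝒳 → ℝ), Measurable g →
      ∫ ω in {ω | y ω = i ∧ ytilde ω = j}, g (X ω) ∂μ =
        a i j * ∫ ω in {ω | y ω = i}, g (X ω) ∂μ := by
    intro i j g hg
    rw [← integral_map hX.aemeasurable hg.aestronglyMeasurable, hmap i j,
      integral_smul_measure, ← integral_map hX.aemeasurable hg.aestronglyMeasurable,
      ENNReal.toReal_ofReal (ha_nonneg i j), smul_eq_mul]
  -- key pointwise identity from symmetry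
  have hkey : ∀ (i : Fin C) (u : P), ∑ j, a i j * ℓ u j = b * ℓ u i + c := by
    intro i u
    have h2 : ∀ j, a i j * ℓ u j =
        η / ((C : ℝ) - 1) * ℓ u j +
          (if j = i then (1 - η - η / ((C : ℝ) - 1)) * ℓ u i else 0) := by
      intro j
      by_cases hij : j = i
      · subst hij; simp [ha_def]; ring
      · simp [ha_def, hij]
    rw [Finset.sum_congr rfl (fun j _ => h2 j), Finset.sum_add_distrib, ← Finset.mul_sum,
      hsym u, Finset.sum_ite_eq' Finset.univ i
        (fun _ => (1 - η - η / ((C : ℝ) - 1)) * ℓ u i)]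
    simp only [Finset.mem_univ, if_true]
    rw [hb_def, hc_def]
    field_simp
    ring
  -- the sum of measures of the partition is one
  have hsum1 : ∑ i, ((μ {ω | y ω = i}).toReal) = 1 := by
    have h1 := partition_sum μ y hy (fun _ => (1 : ℝ)) (integrable_const 1)
    simp only [integral_const, measureReal_def, measure_univ, ENNReal.toReal_one, one_smul, smul_eq_mul,
      mul_one, Measure.restrict_apply_univ] at h1
    linarith [h1]
  -- the main identity: R_η(f) = b * R(f) + c
  have hmain : ∀ f : 𝒳 → P, Measurable f →
      ∫ ω, ℓ (f (X ω)) (ytilde ω) ∂μ = b * ∫ ω, ℓ (f (X ω)) (y ω) ∂μ + c := by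
    intro f hf
    have hmz : ∀ (z : Ω → Fin C), Measurable z →
        Measurable fun ω => ℓ (f (X ω)) (z ω) := by
      intro z hz
      have e : (fun ω => ℓ (f (X ω)) (z ω)) =
          fun ω => ∑ k, if z ω = k then ℓ (f (X ω)) k else 0 := by
        funext ω
        rw [Finset.sum_eq_single (z ω)]
        · simp
        · intro k _ hk; rw [if_neg (Ne.symm hk)]
        · simp
      rw [e]
      exact Finset.measurable_sum _ fun k _ =>
        Measurable.ite (hz (measurableSet_singleton k)) ((hℓ k).comp (hf.comp hX))
          measurable_const
    have hintz : ∀ (z : Ω → Fin C), Measurable z →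
        Integrable (fun ω => ℓ (f (X ω)) (z ω)) μ := by
      intro z hz
      refine Integrable.mono' (integrable_const M) (hmz z hz).aestronglyMeasurable
        (ae_of_all _ fun ω => ?_)
      simpa [Real.norm_eq_abs] using hM (f (X ω)) (z ω)
    have hintg : ∀ (j : Fin C) (s : Set Ω),
        Integrable (fun ω => ℓ (f (X ω)) j) (μ.restrict s) := by
      intro j s
      refine Integrable.mono' (integrable_const M)
        (((hℓ j).comp (hf.comp hX)).aestronglyMeasurable) (ae_of_all _ fun ω => ?_)
      simpa [Real.norm_eq_abs] using hM (f (X ω)) j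
    calc ∫ ω, ℓ (f (X ω)) (ytilde ω) ∂μ
        = ∑ j, ∫ ω in {ω | ytilde ω = j}, ℓ (f (X ω)) (ytilde ω) ∂μ :=
          partition_sum μ ytilde hyt _ (hintz ytilde hyt)
      _ = ∑ j, ∫ ω in {ω | ytilde ω = j}, ℓ (f (X ω)) j ∂μ := by
          refine Finset.sum_congr rfl fun j _ => ?_
          exact setIntegral_congr_fun (hmeasyt j) (fun ω hω => by
            simp only [Set.mem_setOf_eq] at hω; rw [hω])
      _ = ∑ j, ∑ i, ∫ ω in {ω | y ω = i ∧ ytilde ω = j}, ℓ (f (X ω)) j ∂μ := by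
          refine Finset.sum_congr rfl fun j _ => ?_
          rw [partition_sum (μ.restrict {ω | ytilde ω = j}) y hy _ (hintg j _)]
          refine Finset.sum_congr rfl fun i _ => ?_
          rw [Measure.restrict_restrict (hmeasy i)]
          rfl
      _ = ∑ i, ∑ j, a i j * ∫ ω in {ω | y ω = i}, ℓ (f (X ω)) j ∂μ := by
          rw [Finset.sum_comm]
          exact Finset.sum_congr rfl fun i _ => Finset.sum_congr rfl fun j _ =>
            hint_map i j (fun x => ℓ (f x) j) ((hℓ j).comp hf)
      _ = ∑ i, ∫ ω in {ω | y ω = i}, (b * ℓ (f (X ω)) i + c) ∂μ := by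
          refine Finset.sum_congr rfl fun i _ => ?_
          have : ∀ j : Fin C, ∫ ω in {ω | y ω = i}, a i j * ℓ (f (X ω)) j ∂μ =
              a i j * ∫ ω in {ω | y ω = i}, ℓ (f (X ω)) j ∂μ := fun j =>
            integral_const_mul _ _
          rw [← Finset.sum_congr rfl fun j _ => this j,
            ← integral_finset_sum _ (fun j _ => (hintg j _).const_mul (a i j))]
          exact setIntegral_congr_fun (hmeasy i) (fun ω _ => hkey i (f (X ω)))
      _ = ∑ i, (b * ∫ ω in {ω | y ω = i}, ℓ (f (X ω)) i ∂μ + c * (μ {ω | y ω = i}).toReal) := by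
          refine Finset.sum_congr rfl fun i _ => ?_
          rw [integral_add ((hintg i _).const_mul b) (integrable_const c),
            integral_const_mul, setIntegral_const, smul_eq_mul, measureReal_def]
          ring
      _ = b * ∫ ω, ℓ (f (X ω)) (y ω) ∂μ + c := by
          rw [Finset.sum_add_distrib, ← Finset.mul_sum, ← Finset.mul_sum, hsum1, mul_one]
          congr 1
          rw [partition_sum μ y hy _ (hintz y hy)]
          congr 1
          refine Finset.sum_congr rfl fun i _ => ?_
          exact setIntegral_congr_fun (hmeasy i) (fun ω hω => by
            simp only [Set.mem_setOf_eq] at hω; rw [hω])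
  refine ⟨?_, hbpos, ?_⟩
  · intro f f' hf hf'
    rw [hmain f hf, hmain f' hf']
    ring
  · intro F hF f hfF
    constructor
    · intro h g hgF
      have h1 := hmain f (hF f hfF)
      have h2 := hmain g (hF g hgF)
      have h3 := h g hgF
      nlinarith [mul_le_mul_of_nonneg_left h3 hbpos.le]
    · intro h g hgF
      have h1 := hmain f (hF f hfF)
      have h2 := hmain g (hF g hgF)
      have h3 := h g hgF
      have h4 : b * ∫ ω, ℓ (f (X ω)) (y ω) ∂μ ≤ b * ∫ ω, ℓ (g (X ω)) (y ω) ∂μ := by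
        linarith
      exact le_of_mul_le_mul_left h4 hbpos

end DisNCL
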